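/- Let a > 0 and k > 2 be integers with k either odd or divisible by 4, and let m be an integer such that -m+ζ_k and -(m+a)+ζ_k are multiplicatively dependent and neither of them is a root of unity. Let p be a prime dividing both Φ_k(m) and Φ_k(m+a) with p not dividing k, set f_p = ord_k(p), and let n = ν_p(gcd(Φ_k(m), Φ_k(m+a))). Then f_p divides n and n ≤ ⌊ν_p(a)/f_p⌋·f_p. -/

import Mathlib

open Polynomial

/-- Two elements of a field are *multiplicatively independent* if the only integers `r, s`
with `α ^ r = β ^ s` are `r = s = 0`. -/
def MultIndep {F : Type*} [Field F] (α β : F) : Prop :=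
  ∀ r s : ℤ, α ^ r = β ^ s → r = 0 ∧ s = 0

/-- An element of a field is a *root of unity* if some positive power of it equals `1`. -/
def IsRootOfUnity {F : Type*} [Field F] (α : F) : Prop :=
  ∃ n : ℕ, 0 < n ∧ α ^ n = 1

private lemma rootOfUnity_of_zpow_eq_one {F : Type*} [Field F] {β : F} {s : ℤ}
    (hs : s ≠ 0) (h : β ^ s = 1) : IsRootOfUnity β := by
  refine ⟨s.natAbs, Int.natAbs_pos.mpr hs, ?_⟩
  rcases Int.natAbs_eq s with h' | h'
  · rw [h', zpow_natCast] at h; exact h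
  · rw [h', zpow_neg, zpow_natCast, inv_eq_one] at h; exact h

private lemma padic_toZMod_eq_zero_iff {p : ℕ} [Fact p.Prime] (t : PadicInt p) :
    PadicInt.toZMod t = 0 ↔ (p : PadicInt p) ∣ t := by
  rw [← RingHom.mem_ker, PadicInt.ker_toZMod, PadicInt.maximalIdeal_eq_span_p,
    Ideal.mem_span_singleton]

theorem stmt16 (a : ℕ) (ha : 0 < a) (k : ℕ+) (hk : 2 < (k : ℕ))
    (hodd : Odd (k : ℕ) ∨ 4 ∣ (k : ℕ)) (m : ℤ)
    (ζ : CyclotomicField k ℚ) (hζ : IsPrimitiveRoot ζ (k : ℕ))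
    (hdep : ¬ MultIndep (-(m : CyclotomicField k ℚ) + ζ)
      (-((m + (a : ℤ) : ℤ) : CyclotomicField k ℚ) + ζ))
    (hru1 : ¬ IsRootOfUnity (-(m : CyclotomicField k ℚ) + ζ))
    (hru2 : ¬ IsRootOfUnity (-((m + (a : ℤ) : ℤ) : CyclotomicField k ℚ) + ζ))
    (p : ℕ) (hp : p.Prime)
    (hpm : (p : ℤ) ∣ (cyclotomic (k : ℕ) ℤ).eval m)
    (hpma : (p : ℤ) ∣ (cyclotomic (k : ℕ) ℤ).eval (m + (a : ℤ)))
    (hpk : ¬ p ∣ (k : ℕ))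
    (f n : ℕ) (hf : f = orderOf ((p : ZMod (k : ℕ))))
    (hn : n = padicValNat p
      (Int.gcd ((cyclotomic (k : ℕ) ℤ).eval m) ((cyclotomic (k : ℕ) ℤ).eval (m + (a : ℤ))))) :
    f ∣ n ∧ n ≤ padicValNat p a / f * f := by
  haveI : Fact p.Prime := ⟨hp⟩
  have hk0 : 0 < (k : ℕ) := k.pos
  haveI hkZ : NeZero ((k : ℕ) : ZMod p) :=
    ⟨by rwa [Ne, ZMod.natCast_eq_zero_iff]⟩
  -- `m mod p` is a primitive k-th root of unity
  have hordm : IsPrimitiveRoot ((m : ZMod p)) (k : ℕ) := by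
    rw [← Polynomial.isRoot_cyclotomic_iff (R := ZMod p)]
    have h0 : (((cyclotomic (k : ℕ) ℤ).eval m : ℤ) : ZMod p) = 0 :=
      (ZMod.intCast_zmod_eq_zero_iff_dvd _ _).mpr hpm
    rw [IsRoot.def, ← map_cyclotomic_int (k : ℕ) (ZMod p), eval_intCast_map]
    exact_mod_cast h0
  have hm_ne : ((m : ZMod p)) ≠ 0 := by
    intro h0
    have h1 := hordm.pow_eq_one
    rw [h0, zero_pow hk0.ne'] at h1
    exact one_ne_zero h1.symm
  -- f = 1
  have hkdvd : (k : ℕ) ∣ p - 1 :=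
    hordm.dvd_of_pow_eq_one _ (ZMod.pow_card_sub_one_eq_one hm_ne)
  have hf1 : f = 1 := by
    have h0 : (((p - 1 : ℕ)) : ZMod (k : ℕ)) = 0 :=
      (ZMod.natCast_eq_zero_iff _ _).mpr hkdvd
    have hp1 : ((p : ℕ) : ZMod (k : ℕ)) = 1 := by
      calc ((p : ℕ) : ZMod (k : ℕ)) = ((p - 1 + 1 : ℕ) : ZMod (k : ℕ)) := by
            rw [Nat.sub_add_cancel hp.one_lt.le]
        _ = 1 := by rw [Nat.cast_add, h0, Nat.cast_one, zero_add]
    rw [hf, hp1, orderOf_one]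
  rw [hf1, Nat.div_one, mul_one]
  refine ⟨one_dvd _, ?_⟩
  -- Hensel lifting of m to a k-th root of unity z in ℤ_p
  have hmk1 : ((m : ZMod p)) ^ (k : ℕ) = 1 := hordm.pow_eq_one
  have hpdvd1 : (p : ℤ) ∣ m ^ (k : ℕ) - 1 := by
    have h0 : ((m ^ (k : ℕ) - 1 : ℤ) : ZMod p) = 0 := by push_cast; rw [hmk1]; ring
    exact (ZMod.intCast_zmod_eq_zero_iff_dvd _ _).mp h0
  have hder_int : ¬ (p : ℤ) ∣ ((k : ℕ) : ℤ) * m ^ ((k : ℕ) - 1) := by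
    intro hdvd
    have h0 : ((((k : ℕ) : ℤ) * m ^ ((k : ℕ) - 1) : ℤ) : ZMod p) = 0 :=
      (ZMod.intCast_zmod_eq_zero_iff_dvd _ _).mpr hdvd
    push_cast at h0
    rcases mul_eq_zero.mp h0 with h' | h'
    · exact hkZ.out h'
    · exact pow_ne_zero _ hm_ne h'
  have hnorm_ev : ‖((m ^ (k : ℕ) - 1 : ℤ) : PadicInt p)‖ < 1 :=
    (PadicInt.norm_int_lt_one_iff_dvd _).mpr hpdvd1
  have hnorm_der : ‖((((k : ℕ) : ℤ) * m ^ ((k : ℕ) - 1) : ℤ) : PadicInt p)‖ = 1 := by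
    refine le_antisymm (PadicInt.norm_le_one _) (not_lt.mp fun hlt => ?_)
    exact hder_int ((PadicInt.norm_int_lt_one_iff_dvd _).mp hlt)
  have hev : ((X : Polynomial (PadicInt p)) ^ (k : ℕ) - 1).eval ((m : ℤ) : PadicInt p)
      = ((m ^ (k : ℕ) - 1 : ℤ) : PadicInt p) := by
    simp only [eval_sub, eval_pow, eval_X, eval_one]
    push_cast; ring
  have hder : (derivative ((X : Polynomial (PadicInt p)) ^ (k : ℕ) - 1)).eval ((m : ℤ) : PadicInt p)
      = ((((k : ℕ) : ℤ) * m ^ ((k : ℕ) - 1) : ℤ) : PadicInt p) := by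
    rw [derivative_sub, derivative_one, derivative_X_pow, sub_zero, eval_mul, eval_pow, eval_X,
      eval_C]
    push_cast; ring
  obtain ⟨z, hz_root, hz_close, -, -⟩ :=
    hensels_lemma (F := (X : Polynomial (PadicInt p)) ^ (k : ℕ) - 1) (a := ((m : ℤ) : PadicInt p))
      (by rw [coe_aeval_eq_eval, hev, hder, hnorm_der, one_pow]; exact hnorm_ev)
  rw [coe_aeval_eq_eval, hder, hnorm_der] at hz_close
  have hzk : z ^ (k : ℕ) = 1 := by
    have h0 := hz_root
    simp only [coe_aeval_eq_eval, eval_sub, eval_pow, eval_X, eval_one, sub_eq_zero] at h0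
    exact h0
  have hz_dvd : (p : PadicInt p) ∣ z - ((m : ℤ) : PadicInt p) :=
    (PadicInt.norm_lt_one_iff_dvd _).mp hz_close
  have htz : PadicInt.toZMod z = ((m : ZMod p)) := by
    have h0 : PadicInt.toZMod (z - ((m : ℤ) : PadicInt p)) = 0 :=
      (padic_toZMod_eq_zero_iff _).mpr hz_dvd
    rwa [map_sub, map_intCast, sub_eq_zero] at h0
  have hzprim : IsPrimitiveRoot z (k : ℕ) := by
    refine ⟨hzk, fun l hl => hordm.dvd_of_pow_eq_one l ?_⟩
    have h0 := congrArg PadicInt.toZMod hl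
    rwa [map_pow, htz, map_one] at h0
  -- the algebra map φ : CyclotomicField k ℚ → ℚ_p sending ζ to z
  have hzQ : IsPrimitiveRoot ((z : Padic p)) (k : ℕ) :=
    hzprim.map_of_injective (f := PadicInt.Coe.ringHom) Subtype.coe_injective
  have hcycQ : (cyclotomic (k : ℕ) (Padic p)).IsRoot (z : Padic p) :=
    hzQ.isRoot_cyclotomic hk0
  have : IsCyclotomicExtension {(k : ℕ)} ℚ (CyclotomicField k ℚ) := by
    convert CyclotomicField.instIsCyclotomicExtensionSingletonNatSetOfCharZero (n := k) (K := ℚ)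
    · rfl
    · exact Subsingleton.elim _ _
  have hgen : (hζ.powerBasis ℚ).gen = ζ := hζ.powerBasis_gen ℚ
  have hmin : (Polynomial.aeval ((z : Padic p))) (minpoly ℚ (hζ.powerBasis ℚ).gen) = 0 := by
    rw [hgen, ← cyclotomic_eq_minpoly_rat hζ hk0, aeval_def, eval₂_eq_eval_map, map_cyclotomic]
    exact hcycQ
  set φ : CyclotomicField k ℚ →ₐ[ℚ] Padic p := (hζ.powerBasis ℚ).lift ((z : Padic p)) hmin
    with hφdef
  have hφζ : φ ζ = (z : Padic p) := by
    have h0 : φ (hζ.powerBasis ℚ).gen = (z : Padic p) := PowerBasis.lift_gen _ _ _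
    rwa [hgen] at h0
  have hφinj : Function.Injective φ := φ.toRingHom.injective
  -- unpack multiplicative dependence
  rw [MultIndep] at hdep
  push_neg at hdep
  obtain ⟨r, s, hrs, hne⟩ := hdep
  have hr0 : r ≠ 0 := by
    rintro rfl
    have hs0 : s ≠ 0 := fun h => by simp [h] at hne
    have hβ1 : (-((m + (a : ℤ) : ℤ) : CyclotomicField k ℚ) + ζ) ^ s = 1 := by
      rw [← hrs, zpow_zero]
    exact hru2 (rootOfUnity_of_zpow_eq_one hs0 hβ1)
  have hs0 : s ≠ 0 := by
    rintro rfl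
    have hα1 : (-(m : CyclotomicField k ℚ) + ζ) ^ r = 1 := by rw [hrs, zpow_zero]
    exact hru1 (rootOfUnity_of_zpow_eq_one hr0 hα1)
  -- images under φ
  set x : PadicInt p := z - ((m : ℤ) : PadicInt p) with hxdef
  set y : PadicInt p := z - (((m + (a : ℤ)) : ℤ) : PadicInt p) with hydef
  have hXz : φ (-(m : CyclotomicField k ℚ) + ζ) = ((x : PadicInt p) : Padic p) := by
    rw [map_add, map_neg, map_intCast, hφζ, hxdef]
    push_cast; ring
  have hYz : φ (-((m + (a : ℤ) : ℤ) : CyclotomicField k ℚ) + ζ) = ((y : PadicInt p) : Padic p) := by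
    rw [map_add, map_neg, map_intCast, hφζ, hydef]
    push_cast; ring
  have hXY : ((x : PadicInt p) : Padic p) ^ r = ((y : PadicInt p) : Padic p) ^ s := by
    rw [← hXz, ← hYz, ← map_zpow₀, hrs, map_zpow₀]
  have hxy : x - y = ((a : ℤ) : PadicInt p) := by
    rw [hxdef, hydef]; push_cast; ring
  have haQ : ((a : ℤ) : PadicInt p) ≠ 0 := by
    have : ((a : ℤ) : PadicInt p) = ((a : ℕ) : PadicInt p) := by push_cast; ring
    rw [this]
    exact Nat.cast_ne_zero.mpr ha.ne'
  have hx_norm : ‖x‖ < 1 := hz_close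
  have hx0 : x ≠ 0 := by
    intro h0
    have hX0 : ((x : PadicInt p) : Padic p) = 0 := by rw [h0]; norm_cast
    have hY0 : ((y : PadicInt p) : Padic p) = 0 := by
      have h1 := hXY
      rw [hX0, zero_zpow _ hr0] at h1
      exact (zpow_eq_zero_iff hs0).mp h1.symm
    have hy0 : y = 0 := by
      have hY0' : ((y : PadicInt p) : Padic p) = ((0 : PadicInt p) : Padic p) := by
        simpa using hY0
      exact Subtype.coe_injective hY0'
    rw [h0, hy0, sub_zero] at hxy
    exact haQ hxy.symm
  have hy_lt : ‖y‖ < 1 := by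
    rcases lt_or_eq_of_le (PadicInt.norm_le_one y) with h | h
    · exact h
    · exfalso
      have hnorm_eq : ‖((x : PadicInt p) : Padic p)‖ ^ r = ‖((y : PadicInt p) : Padic p)‖ ^ s := by
        rw [← norm_zpow, hXY, norm_zpow]
      rw [← PadicInt.norm_def, ← PadicInt.norm_def, h, one_zpow] at hnorm_eq
      have hx_pos : (0 : ℝ) < ‖x‖ := norm_pos_iff.mpr hx0
      have hlog := congrArg Real.log hnorm_eq
      rw [Real.log_zpow, Real.log_one] at hlog
      rcases mul_eq_zero.mp hlog with h' | h'
      · exact hr0 (by exact_mod_cast h')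
      · exact (Real.log_neg hx_pos hx_norm).ne h'
  have ha_lt : ‖((a : ℤ) : PadicInt p)‖ < 1 := by
    rw [← hxy, sub_eq_add_neg]
    calc ‖x + -y‖ ≤ max ‖x‖ ‖-y‖ := PadicInt.nonarchimedean x (-y)
      _ < 1 := by rw [norm_neg]; exact max_lt hx_norm hy_lt
  have hpa : (p : ℤ) ∣ (a : ℤ) := (PadicInt.norm_int_lt_one_iff_dvd _).mp ha_lt
  have haZmod : ((a : ℤ) : ZMod p) = 0 := (ZMod.intCast_zmod_eq_zero_iff_dvd _ _).mpr hpa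
  -- the geometric sums are units in ℤ_p
  have hS_unit : ∀ c : ℤ, ((c : ZMod p)) = (m : ZMod p) →
      IsUnit (∑ i ∈ Finset.range (k : ℕ), ((c : ℤ) : PadicInt p) ^ i * z ^ ((k : ℕ) - 1 - i)) := by
    intro c hc
    rw [PadicInt.isUnit_iff]
    refine le_antisymm (PadicInt.norm_le_one _) (not_lt.mp fun hlt => ?_)
    have h0 : PadicInt.toZMod
        (∑ i ∈ Finset.range (k : ℕ), ((c : ℤ) : PadicInt p) ^ i * z ^ ((k : ℕ) - 1 - i)) = 0 :=
      (padic_toZMod_eq_zero_iff _).mpr ((PadicInt.norm_lt_one_iff_dvd _).mp hlt)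
    rw [map_sum] at h0
    have hterm : ∀ i ∈ Finset.range (k : ℕ),
        PadicInt.toZMod (((c : ℤ) : PadicInt p) ^ i * z ^ ((k : ℕ) - 1 - i))
          = ((m : ZMod p)) ^ ((k : ℕ) - 1) := by
      intro i hi
      rw [map_mul, map_pow, map_pow, htz, map_intCast, hc, ← pow_add]
      congr 1
      have := Finset.mem_range.mp hi
      omega
    rw [Finset.sum_congr rfl hterm, Finset.sum_const, Finset.card_range, nsmul_eq_mul] at h0
    rcases mul_eq_zero.mp h0 with h' | h'
    · exact hkZ.out h'
    · exact pow_ne_zero _ hm_ne h'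
  -- divisibility by p^n of the two values
  have he1dvd : (cyclotomic (k : ℕ) ℤ).eval m ∣ m ^ (k : ℕ) - 1 := by
    have h0 := Polynomial.eval_dvd (x := m) (cyclotomic.dvd_X_pow_sub_one (k : ℕ) ℤ)
    simpa using h0
  have he2dvd : (cyclotomic (k : ℕ) ℤ).eval (m + (a : ℤ)) ∣ (m + (a : ℤ)) ^ (k : ℕ) - 1 := by
    have h0 := Polynomial.eval_dvd (x := m + (a : ℤ)) (cyclotomic.dvd_X_pow_sub_one (k : ℕ) ℤ)
    simpa using h0
  have hm_pow_ne : m ^ (k : ℕ) - 1 ≠ 0 := by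
    intro h0
    have hmu : IsUnit m := IsUnit.of_pow_eq_one (sub_eq_zero.mp h0) hk0.ne'
    have h2 : ((m : ZMod p)) ^ 2 = 1 := by
      rcases Int.isUnit_iff.mp hmu with h1 | h1 <;> rw [h1] <;> push_cast <;> ring
    have := Nat.le_of_dvd (by norm_num) (hordm.dvd_of_pow_eq_one 2 h2)
    omega
  have he1_ne : (cyclotomic (k : ℕ) ℤ).eval m ≠ 0 := by
    intro h0
    exact hm_pow_ne (zero_dvd_iff.mp (h0 ▸ he1dvd))
  have hg_ne : Int.gcd ((cyclotomic (k : ℕ) ℤ).eval m) ((cyclotomic (k : ℕ) ℤ).eval (m + (a : ℤ)))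
      ≠ 0 := fun h0 => he1_ne (Int.gcd_eq_zero_iff.mp h0).1
  have hpn_g : ((p : ℤ)) ^ n ∣
      (Int.gcd ((cyclotomic (k : ℕ) ℤ).eval m) ((cyclotomic (k : ℕ) ℤ).eval (m + (a : ℤ))) : ℤ) := by
    rw [hn]
    exact_mod_cast Int.natCast_dvd_natCast.mpr (pow_padicValNat_dvd (p := p))
  have hpn1 : (p : ℤ) ^ n ∣ m ^ (k : ℕ) - 1 :=
    (hpn_g.trans (Int.gcd_dvd_left _ _)).trans he1dvd
  have hpn2 : (p : ℤ) ^ n ∣ (m + (a : ℤ)) ^ (k : ℕ) - 1 :=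
    (hpn_g.trans (Int.gcd_dvd_right _ _)).trans he2dvd
  -- transfer to ℤ_p and cancel the unit geometric sums
  have key : ∀ c : ℤ, ((c : ZMod p)) = (m : ZMod p) → (p : ℤ) ^ n ∣ c ^ (k : ℕ) - 1 →
      ((p : PadicInt p)) ^ n ∣ (((c : ℤ) : PadicInt p) - z) := by
    intro c hc hdvd
    have h1 : ((p : PadicInt p)) ^ n ∣ ((c ^ (k : ℕ) - 1 : ℤ) : PadicInt p) :=
      (PadicInt.pow_p_dvd_int_iff _ _).mpr (by exact_mod_cast hdvd)
    have h2 : ((c ^ (k : ℕ) - 1 : ℤ) : PadicInt p)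
        = (∑ i ∈ Finset.range (k : ℕ), ((c : ℤ) : PadicInt p) ^ i * z ^ ((k : ℕ) - 1 - i))
          * (((c : ℤ) : PadicInt p) - z) := by
      rw [geom_sum₂_mul]
      rw [hzk]
      push_cast; ring
    rw [h2] at h1
    exact ((hS_unit c hc).dvd_mul_left).mp h1
  have h1 := key m rfl hpn1
  have h2 := key (m + (a : ℤ)) (by push_cast [haZmod]; ring) hpn2
  have h3 : ((p : PadicInt p)) ^ n ∣ ((a : ℤ) : PadicInt p) := by
    have h4 := dvd_sub h2 h1
    have h5 : ((((m + (a : ℤ)) : ℤ) : PadicInt p) - z) - ((((m : ℤ)) : PadicInt p) - z)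
        = ((a : ℤ) : PadicInt p) := by push_cast; ring
    rwa [h5] at h4
  have h6 : (p : ℤ) ^ n ∣ (a : ℤ) := by
    have := (PadicInt.pow_p_dvd_int_iff n (a : ℤ)).mp h3
    exact_mod_cast this
  have h7 : p ^ n ∣ a := by exact_mod_cast h6
  exact (padicValNat_dvd_iff_le ha.ne').mp h7
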